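/- Let h : ℕ → ℝ be S-shaped with threshold t* and suppose s*(t) exists for all t (where s*(t) := min{s > t : h(s+1) − h(s) < (h(s) − h(t))/(s − t)}). Then: (i) if t ≤ t' < s*(t) then s*(t') ≤ s*(t); (ii) if t < t' then s*(t') − t' ≤ s*(t) − t, with strict inequality when t < t*. -/

import Mathlib

/-- One-step monotonicity of the average slope. -/
lemma slope_step (h : ℕ → ℝ) (t u : ℕ) (htu : t < u)
    (hge : (h u - h t) / ((u : ℝ) - t) ≤ h (u + 1) - h u) :
    (h u - h t) / ((u : ℝ) - t) ≤ (h (u + 1) - h t) / (((u + 1 : ℕ) : ℝ) - t) := by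
  have hδ : (0 : ℝ) < (u : ℝ) - t := by
    have : (t : ℝ) < u := by exact_mod_cast htu
    linarith
  have hδ1 : (0 : ℝ) < ((u + 1 : ℕ) : ℝ) - t := by push_cast; linarith
  rw [div_le_div_iff₀ hδ hδ1]
  have ha : h u - h t ≤ (h (u + 1) - h u) * ((u : ℝ) - t) := by
    rw [div_le_iff₀ hδ] at hge
    linarith
  push_cast
  nlinarith

/-- Average slope from t is nondecreasing up to s, given no early crossing before s. -/
lemma slope_mono (h : ℕ → ℝ) (t s : ℕ)
    (hmin : ∀ s' : ℕ, t < s' → s' < s →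
      ¬ (h (s' + 1) - h s' < (h s' - h t) / ((s' : ℝ) - t))) :
    ∀ u v : ℕ, t < u → u ≤ v → v ≤ s →
      (h u - h t) / ((u : ℝ) - t) ≤ (h v - h t) / ((v : ℝ) - t) := by
  intro u v htu huv hvs
  induction v, huv using Nat.le_induction with
  | base => exact le_rfl
  | succ v huv ih =>
    have hvs' : v ≤ s := by omega
    have h1 := ih hvs'
    have htv : t < v := lt_of_lt_of_le htu huv
    have h2 : (h v - h t) / ((v : ℝ) - t) ≤ h (v + 1) - h v :=
      not_lt.mp (hmin v htv (by omega))
    exact h1.trans (slope_step h t v htv h2)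

/-- Part (i): if t ≤ t' < s*(t) then s*(t') ≤ s*(t). -/
lemma parti (h : ℕ → ℝ)
    (sstar : ℕ → ℕ)
    (hlt : ∀ t, t < sstar t)
    (hdef : ∀ t, h (sstar t + 1) - h (sstar t)
      < (h (sstar t) - h t) / ((sstar t : ℝ) - t))
    (hmin : ∀ t s' : ℕ, t < s' → s' < sstar t →
      ¬ (h (s' + 1) - h s' < (h s' - h t) / ((s' : ℝ) - t))) :
    ∀ t t' : ℕ, t ≤ t' → t' < sstar t → sstar t' ≤ sstar t := by
  intro t t' htt' ht's
  rcases eq_or_lt_of_le htt' with rfl | htt'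
  · exact le_refl _
  · set s := sstar t with hs
    have hts : t < s := hlt t
    have ht's' : t' < s := ht's
    have hAst : (h t' - h t) / ((t' : ℝ) - t) ≤ (h s - h t) / ((s : ℝ) - t) :=
      slope_mono h t s (fun s' a b => hmin t s' a b) t' s htt' (le_of_lt ht's) le_rfl
    have hst : (0 : ℝ) < (s : ℝ) - t := by
      have : (t : ℝ) < s := by exact_mod_cast hts
      linarith
    have ht't : (0 : ℝ) < (t' : ℝ) - t := by
      have : (t : ℝ) < t' := by exact_mod_cast htt'
      linarith
    have hst' : (0 : ℝ) < (s : ℝ) - t' := by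
      have : (t' : ℝ) < s := by exact_mod_cast ht's'
      linarith
    set A : ℝ := (h s - h t) / ((s : ℝ) - t) with hA
    have hchord : h t' - h t ≤ ((t' : ℝ) - t) * A := by
      rw [div_le_iff₀ ht't] at hAst
      linarith [hAst]
    have hsA : h s - h t = ((s : ℝ) - t) * A := by
      rw [hA, mul_div_assoc']
      exact (mul_div_cancel_left₀ _ (ne_of_gt hst)).symm
    have hkey : A ≤ (h s - h t') / ((s : ℝ) - t') := by
      rw [le_div_iff₀ hst']
      nlinarith
    have hcert : h (s + 1) - h s < (h s - h t') / ((s : ℝ) - t') :=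
      lt_of_lt_of_le (hdef t) hkey
    by_contra hcon
    push_neg at hcon
    exact hmin t' s ht's' hcon hcert

theorem stmt8 (h : ℕ → ℝ) (tstar : ℕ)
    (hS : ∀ t : ℕ, (h (t + 2) - h (t + 1) < h (t + 1) - h t ↔ tstar < t + 1))
    (sstar : ℕ → ℕ)
    (hlt : ∀ t, t < sstar t)
    (hdef : ∀ t, h (sstar t + 1) - h (sstar t)
      < (h (sstar t) - h t) / ((sstar t : ℝ) - t))
    (hmin : ∀ t s' : ℕ, t < s' → s' < sstar t →
      ¬ (h (s' + 1) - h s' < (h s' - h t) / ((s' : ℝ) - t))) :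
    (∀ t t' : ℕ, t ≤ t' → t' < sstar t → sstar t' ≤ sstar t) ∧
    (∀ t t' : ℕ, t < t' → sstar t' - t' ≤ sstar t - t) ∧
    (∀ t t' : ℕ, t < t' → t < tstar → sstar t' - t' < sstar t - t) := by
  have pi := parti h sstar hlt hdef hmin
  -- single-step weak monotonicity
  have step : ∀ t : ℕ, sstar (t + 1) - (t + 1) ≤ sstar t - t := by
    intro t
    by_cases hcase : t + 1 < sstar t
    · have := pi t (t + 1) (by omega) hcase
      omega
    · -- sstar t = t + 1
      have hst : sstar t = t + 1 := by have := hlt t; omega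
      have hd : h (t + 2) - h (t + 1) < h (t + 1) - h t := by
        have := hdef t
        rw [hst] at this
        have hone : ((t + 1 : ℕ) : ℝ) - t = 1 := by push_cast; ring
        rw [hone, div_one] at this
        convert this using 3 <;> omega
      have htst : tstar < t + 1 := (hS t).mp hd
      have hd2 : h (t + 3) - h (t + 2) < h (t + 2) - h (t + 1) := by
        have := (hS (t + 1)).mpr (by omega)
        convert this using 3 <;> omega
      have hle : sstar (t + 1) ≤ t + 2 := by
        by_contra hcon
        push_neg at hcon
        apply hmin (t + 1) (t + 2) (by omega) (by omega)
        have hone : ((t + 2 : ℕ) : ℝ) - ((t + 1 : ℕ) : ℝ) = 1 := by push_cast; ring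
        rw [hone, div_one]
        convert hd2 using 3 <;> omega
      have := hlt (t + 1)
      omega
  have weak : ∀ t t' : ℕ, t ≤ t' → sstar t' - t' ≤ sstar t - t := by
    intro t t' htt'
    induction t', htt' using Nat.le_induction with
    | base => exact le_rfl
    | succ t' htt' ih => exact (step t').trans ih
  refine ⟨pi, fun t t' htt' => weak t t' (le_of_lt htt'), ?_⟩
  intro t t' htt' httstar
  have hts : t + 1 < sstar t := by
    by_contra hcon
    have hst : sstar t = t + 1 := by have := hlt t; omega
    have hd : h (t + 2) - h (t + 1) < h (t + 1) - h t := by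
      have := hdef t
      rw [hst] at this
      have hone : ((t + 1 : ℕ) : ℝ) - t = 1 := by push_cast; ring
      rw [hone, div_one] at this
      convert this using 3 <;> omega
    have := (hS t).mp hd
    omega
  have h1 : sstar (t + 1) ≤ sstar t := pi t (t + 1) (by omega) hts
  have h2 : sstar t' - t' ≤ sstar (t + 1) - (t + 1) := weak (t + 1) t' (by omega)
  have := hlt (t + 1)
  omega
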